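/- Let n ≥ 2 be an integer and let P be a convex integer polygon containing no point of nℤ². Suppose that P contains a segment with ℓ(P) + 1 integer points lying on a line x₁ = c, where c is an integer with 0 ≤ c ≤ n (i.e., there are integers a and c with 0 ≤ c ≤ n such that the segment from (c, a) to (c, a + ℓ(P)) is contained in P). Then P is contained in the slab −n + 1 ≤ x₁ ≤ 2n − 1. -/

import Mathlib

open Set

/-- The point of `ℝ²` corresponding to an integer point. -/
def intPt (p : ℤ × ℤ) : ℝ × ℝ := ((p.1 : ℝ), (p.2 : ℝ))

/-- A convex integer polygon: the convex hull of a finite set of integer points,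
with nonempty interior. -/
def IsConvexIntegerPolygon (P : Set (ℝ × ℝ)) : Prop :=
  ∃ V : Finset (ℤ × ℤ), P = convexHull ℝ (intPt '' ↑V) ∧ (interior P).Nonempty

/-- `P` contains no point of the lattice `nℤ² = (nℤ) × (nℤ)`. -/
def FreeOfLattice (n : ℕ) (P : Set (ℝ × ℝ)) : Prop :=
  ∀ u v : ℤ, intPt ((n : ℤ) * u, (n : ℤ) * v) ∉ P

/-- A line in the plane. -/
def IsLine (L : Set (ℝ × ℝ)) : Prop :=
  ∃ a b c : ℝ, ¬(a = 0 ∧ b = 0) ∧ L = {x : ℝ × ℝ | a * x.1 + b * x.2 = c}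

/-- The set of integer points of the plane. -/
def intPts : Set (ℝ × ℝ) := {x : ℝ × ℝ | ∃ p : ℤ × ℤ, x = intPt p}

/-- The lattice diameter of `P` equals `ℓ`: the maximum over all lines `L` of
`|P ∩ ℤ² ∩ L| - 1` is `ℓ`. -/
def LatticeDiamIs (P : Set (ℝ × ℝ)) (ℓ : ℕ) : Prop :=
  (∃ L, IsLine L ∧ (P ∩ intPts ∩ L).ncard = ℓ + 1) ∧
  ∀ L, IsLine L → (P ∩ intPts ∩ L).ncard ≤ ℓ + 1

set_option maxHeartbeats 1000000

def InT (l c D e a x y : ℤ) : Prop :=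
  c ≤ x ∧ x ≤ c + D ∧ e*(x-c) ≤ (y-a)*D ∧ (y-a)*D ≤ e*(x-c) + l*(c+D-x)

lemma ceil_mul (L M : ℤ) (hM : 0 < M) : ∃ j ρ : ℤ, 0 ≤ ρ ∧ ρ < M ∧ j * M = L + ρ := by
  refine ⟨-((-L)/M), (-L) % M, Int.emod_nonneg _ hM.ne', Int.emod_lt_of_pos _ hM, ?_⟩
  have h := Int.mul_ediv_add_emod (-L) M
  linarith

lemma core (n l c D e a : ℤ) (hn : 2 ≤ n) (hl : 0 ≤ l) (hc0 : 0 ≤ c) (hcn : c ≤ n)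
    (hD : 2*n ≤ c + D) :
    (∃ k j : ℤ, InT l c D e a (n*k) (n*j)) ∨
    (∃ x0 y0 p q : ℤ, 1 ≤ p ∧ InT l c D e a x0 y0 ∧
      InT l c D e a (x0+(l+1)*p) (y0+(l+1)*q)) := by
  have hD0 : 0 < D := by omega
  rcases eq_or_lt_of_le hl with h0 | hl1
  · -- l = 0
    subst h0
    right
    refine ⟨c, a, D, e, hD0, ⟨le_refl _, by omega, by simp, by simp⟩,
      ⟨by omega, by omega, ?_, ?_⟩⟩
    · have h1 : e*(c+(0+1)*D-c) = e*D := by ring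
      have h2 : (a+(0+1)*e-a)*D = e*D := by ring
      linarith
    · have h1 : e*(c+(0+1)*D-c) + 0*(c+D-(c+(0+1)*D)) = e*D := by ring
      have h2 : (a+(0+1)*e-a)*D = e*D := by ring
      linarith
  have hl1 : 1 ≤ l := hl1
  by_cases hDl : D ≤ l
  · -- Case 1 : freeness slice at x = n
    left
    obtain ⟨j, ρ, hρ0, hρM, hj⟩ := ceil_mul (a*D + e*(n-c)) (n*D) (by positivity)
    have key : (n*j - a)*D = e*(n*1-c) + ρ := by linear_combination hj
    refine ⟨1, j, by omega, by omega, by linarith, ?_⟩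
    have t1 : 0 ≤ (l-D)*(c+D-n) := mul_nonneg (by omega) (by omega)
    have t2 : 0 ≤ D*(c+D-2*n) := mul_nonneg (by omega) (by omega)
    have iden : l*(c+D-n*1) - n*D = (l-D)*(c+D-n) + D*(c+D-2*n) := by ring
    linarith
  push_neg at hDl
  -- l < D, set s = l+1
  obtain ⟨j, R, hR0, hRD, hj⟩ := ceil_mul (e*(l+1)) D hD0
  by_cases hR : R ≤ l*(D-(l+1))
  · -- Case 2
    right
    have hi := Int.mul_ediv_add_emod j (l+1)
    have hi0 : 0 ≤ j % (l+1) := Int.emod_nonneg _ (by omega)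
    have hi1 : j % (l+1) < l + 1 := Int.emod_lt_of_pos _ (by omega)
    have key : (a + j % (l+1) + (l+1)*(j/(l+1)) - a) * D = j * D := by linear_combination D * hi
    refine ⟨c, a + j % (l+1), 1, j / (l+1), le_refl _, ⟨le_refl _, by omega, ?_, ?_⟩,
      ⟨by omega, by omega, ?_, ?_⟩⟩
    · have h1 : e*(c-c) = 0 := by ring
      have h2 : (a + j % (l+1) - a)*D = (j % (l+1))*D := by ring
      linarith [mul_nonneg hi0 hD0.le]
    · have h1 : e*(c-c) = 0 := by ring
      have h2 : (a + j % (l+1) - a)*D = (j % (l+1))*D := by ring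
      have h3 : l*(c+D-c) = l*D := by ring
      linarith [mul_le_mul_of_nonneg_right (show j % (l+1) ≤ l by omega) hD0.le]
    · have h4 : e*(c+(l+1)*1-c) = e*(l+1) := by ring
      linarith
    · have h4 : e*(c+(l+1)*1-c) = e*(l+1) := by ring
      have h5 : l*(c+D-(c+(l+1)*1)) = l*(D-(l+1)) := by ring
      linarith
  push_neg at hR
  -- R > l*(D-l-1):  D = l+1 impossible; then D = l+2 or (l = 1 and D ≥ l+3)
  have hDl2 : l + 2 ≤ D := by
    rcases eq_or_lt_of_le (show l + 1 ≤ D by omega) with h | h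
    · exfalso
      have hz : l*(D-(l+1)) = 0 := by rw [← h]; ring
      have hR0' : 0 < R := by linarith
      have h3 : R = (j-e)*D := by linear_combination -hj - e*h
      rcases le_or_gt (j-e) 0 with h4 | h4
      · have : (j-e)*D ≤ 0 := mul_nonpos_of_nonpos_of_nonneg h4 hD0.le
        linarith
      · have h5 : 1 ≤ j - e := h4
        have : 1*D ≤ (j-e)*D := mul_le_mul_of_nonneg_right h5 hD0.le
        linarith
    · omega
  by_cases hD2 : D = l + 2
  · -- Case 4 : exceptional, freeness at x = n or x = 2n
    subst hD2
    left
    have hRv : R = l + 1 := by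
      have hz : l*((l+2)-(l+1)) = l := by ring
      omega
    rw [hRv] at hj
    set κ : ℤ := e + 1 - j with hκdef
    have hκ : e = κ * (l+2) - 1 := by rw [hκdef]; linear_combination hj
    obtain ⟨m, r, hr0, hrn, hm⟩ := ceil_mul (a + κ*(n-c)) n (by omega)
    by_cases hC1 : r*(l+2) ≤ l*(l+2) - (l+1)*(n-c)
    · refine ⟨1, m, by omega, by omega, ?_, ?_⟩
      · have key : (n*m - a)*(l+2) = (κ*(n-c) + r)*(l+2) := by linear_combination (l+2) * hm
        have he : e*(n*1-c) = κ*(l+2)*(n-c) - (n-c) := by linear_combination (n-c) * hκ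
        have h6 : 0 ≤ r * (l+2) := mul_nonneg hr0 (by omega)
        have h7 : (κ*(n-c) + r)*(l+2) = κ*(l+2)*(n-c) + r*(l+2) := by ring
        linarith
      · have key : (n*m - a)*(l+2) = (κ*(n-c) + r)*(l+2) := by linear_combination (l+2) * hm
        have he : e*(n*1-c) = κ*(l+2)*(n-c) - (n-c) := by linear_combination (n-c) * hκ
        have h7 : (κ*(n-c) + r)*(l+2) = κ*(l+2)*(n-c) + r*(l+2) := by ring
        have h8 : l*(c+(l+2)-n*1) = l*(l+2) - l*(n-c) := by ring
        linarith
    push_neg at hC1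
    by_cases hC2 : r*(l+2) ≤ l*(l+2) - (l+1)*(2*n-c)
    · refine ⟨2, m + κ, by omega, by omega, ?_, ?_⟩
      · have key : (n*(m+κ) - a)*(l+2) = (κ*(2*n-c) + r)*(l+2) := by linear_combination (l+2) * hm
        have he : e*(n*2-c) = κ*(l+2)*(2*n-c) - (2*n-c) := by linear_combination (2*n-c) * hκ
        have h6 : 0 ≤ r * (l+2) := mul_nonneg hr0 (by omega)
        have h7 : (κ*(2*n-c) + r)*(l+2) = κ*(l+2)*(2*n-c) + r*(l+2) := by ring
        linarith
      · have key : (n*(m+κ) - a)*(l+2) = (κ*(2*n-c) + r)*(l+2) := by linear_combination (l+2) * hm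
        have he : e*(n*2-c) = κ*(l+2)*(2*n-c) - (2*n-c) := by linear_combination (2*n-c) * hκ
        have h7 : (κ*(2*n-c) + r)*(l+2) = κ*(l+2)*(2*n-c) + r*(l+2) := by ring
        have h8 : l*(c+(l+2)-n*2) = l*(l+2) - l*(2*n-c) := by ring
        linarith
    push_neg at hC2
    by_cases hC3 : (n-r)*(l+2) ≤ 2*n-c
    · refine ⟨2, m + κ - 1, by omega, by omega, ?_, ?_⟩
      · have key : (n*(m+κ-1) - a)*(l+2) = (κ*(2*n-c) + r - n)*(l+2) := by
          linear_combination (l+2) * hm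
        have he : e*(n*2-c) = κ*(l+2)*(2*n-c) - (2*n-c) := by linear_combination (2*n-c) * hκ
        have h7 : (κ*(2*n-c) + r - n)*(l+2) = κ*(l+2)*(2*n-c) + r*(l+2) - n*(l+2) := by ring
        have h9 : (n-r)*(l+2) = n*(l+2) - r*(l+2) := by ring
        linarith
      · have key : (n*(m+κ-1) - a)*(l+2) = (κ*(2*n-c) + r - n)*(l+2) := by
          linear_combination (l+2) * hm
        have he : e*(n*2-c) = κ*(l+2)*(2*n-c) - (2*n-c) := by linear_combination (2*n-c) * hκ
        have h7 : (κ*(2*n-c) + r - n)*(l+2) = κ*(l+2)*(2*n-c) + (r-n)*(l+2) := by ring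
        have h1 : (r-n)*(l+2) ≤ (-1)*(l+2) := mul_le_mul_of_nonneg_right (by omega) (by omega)
        have h2 : 0 ≤ l*((l+2) - (2*n-c)) := mul_nonneg (by omega) (by omega)
        have h8 : l*(c+(l+2)-n*2) = l*((l+2)-(2*n-c)) := by ring
        linarith
    push_neg at hC3
    -- contradiction branch
    exfalso
    by_cases hDn : l + 2 ≤ n
    · have hc1 : c = n := by omega
      have hc2 : l + 2 = n := by omega
      rw [hc1] at hC1
      have hz : (l+1)*(n-n) = 0 := by ring
      have hlr : l < r := by
        have h' : l*(l+2) < r*(l+2) := by linarith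
        exact lt_of_mul_lt_mul_right h' (by omega)
      have hnr : n - r = 1 := by omega
      have h'' : (n-r)*(l+2) = l+2 := by rw [hnr]; ring
      omega
    · push_neg at hDn
      by_cases hrn2 : r ≤ n - 2
      · have t3 : 0 ≤ (l+1)*(c+(l+2)-2*n) := mul_nonneg (by omega) (by omega)
        have t4 : r*(l+2) ≤ (n-2)*(l+2) := mul_le_mul_of_nonneg_right hrn2 (by omega)
        have iden : (l+1)*(n-c) = (l+1)*((l+2)-n) - (l+1)*(c+(l+2)-2*n) := by ring
        have iden2 : (l+1)*((l+2)-n) = (l+2)*(l+2) - (l+2) - n*(l+2) + n := by ring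
        have iden3 : (n-2)*(l+2) = n*(l+2) - 2*(l+2) := by ring
        have iden4 : l*(l+2) = (l+2)*(l+2) - 2*(l+2) := by ring
        linarith
      · push_neg at hrn2
        have hr : r = n - 1 := by omega
        rw [hr] at hC1 hC3
        have h'' : (n-(n-1))*(l+2) = l+2 := by ring
        have hs2 : 2*n - c ≤ l + 1 := by omega
        have t5 : 0 ≤ (l+1)*((l+1) - (2*n-c)) := mul_nonneg (by omega) (by omega)
        have iden : (l+1)*(n-c) = (l+1)*((2*n-c)) - (l+1)*n := by ring
        have iden5 : (l+1)*(2*n-c) ≤ (l+1)*(l+1) := by nlinarith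
        have iden6 : (n-1)*(l+2) = n*(l+2) - (l+2) := by ring
        have iden7 : (l+1)*n = n*(l+2) - n := by ring
        have iden8 : (l+1)*(l+1) = l*(l+2) + 1 := by ring
        linarith
  · -- Case 3 : l = 1, D ≥ l+3, 2e = κD + 1
    have hl1' : l = 1 := by
      by_contra hne
      have hl2 : 2 ≤ l := by omega
      have hp : 1*1 ≤ (l-1)*(D-(l+2)) :=
        mul_le_mul (by omega) (by omega) (by norm_num) (by omega)
      have iden : l*(D-(l+1)) = (l-1)*(D-(l+2)) + D - 2 := by ring
      linarith
    subst hl1'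
    have hD4 : 4 ≤ D := by omega
    have hRv : R = D - 1 := by
      have hz : 1*(D-(1+1)) = D - 2 := by ring
      omega
    rw [hRv] at hj
    set κ : ℤ := j - 1 with hκdef
    have hκ : 2*e = κ*D + 1 := by rw [hκdef]; linear_combination -hj
    right
    refine ⟨c + (D-4), a + e - 2*κ, 2, κ, by norm_num, ⟨by omega, by omega, ?_, ?_⟩,
      ⟨by omega, by omega, ?_, ?_⟩⟩
    · have h1 : (a + e - 2*κ - a)*D = e*D - 2*(κ*D) := by ring
      have h2 : e*(c+(D-4)-c) = e*D - 4*e := by ring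
      linarith
    · have h1 : (a + e - 2*κ - a)*D = e*D - 2*(κ*D) := by ring
      have h2 : e*(c+(D-4)-c) = e*D - 4*e := by ring
      have h3 : (1:ℤ)*(c+D-(c+(D-4))) = 4 := by ring
      linarith
    · have h1 : (a + e - 2*κ + (1+1)*κ - a)*D = e*D := by ring
      have h2 : e*(c+(D-4)+(1+1)*2-c) = e*D := by ring
      linarith
    · have h1 : (a + e - 2*κ + (1+1)*κ - a)*D = e*D := by ring
      have h2 : e*(c+(D-4)+(1+1)*2-c) = e*D := by ring
      have h3 : (1:ℤ)*(c+D-(c+(D-4)+(1+1)*2)) = 0 := by ring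
      linarith

-- a point of the vertical segment
lemma seg_param (c a l : ℤ) (hl : 0 ≤ l) (α : ℝ) (h1 : (a:ℝ) ≤ α) (h2 : α ≤ (a:ℝ) + (l:ℝ)) :
    ((c:ℝ), α) ∈ segment ℝ ((c:ℝ), (a:ℝ)) ((c:ℝ), (a:ℝ) + (l:ℝ)) := by
  by_cases hl0 : (l:ℝ) = 0
  · have : α = (a:ℝ) := by rw [hl0] at h2; linarith
    rw [this]
    exact left_mem_segment _ _ _
  · have hlp : (0:ℝ) < l := lt_of_le_of_ne (by exact_mod_cast hl) (Ne.symm hl0)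
    refine ⟨1 - (α - a)/l, (α - a)/l, ?_, ?_, ?_, ?_⟩
    · have : (α - a)/l ≤ 1 := by rw [div_le_one hlp]; linarith
      linarith
    · exact div_nonneg (by linarith) hlp.le
    · ring
    · have : (α - a)/l * l = α - a := div_mul_cancel₀ _ hl0
      simp only [Prod.smul_mk, smul_eq_mul, Prod.mk_add_mk]
      refine Prod.ext ?_ ?_ <;> simp only
      · ring
      · nlinarith [this]

-- membership of an InT-point in P (orientation-free form)
lemma tri_mem (P : Set (ℝ × ℝ)) (hconv : Convex ℝ P) (c a l D e s Y w h : ℤ)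
    (hl : 0 ≤ l) (hD : 0 < D)
    (hseg : segment ℝ ((c:ℝ),(a:ℝ)) ((c:ℝ), (a:ℝ) + (l:ℝ)) ⊆ P)
    (hv : ((w:ℝ), (h:ℝ)) ∈ P) (he : h = a + e)
    (hs0 : 0 ≤ s) (hsD : s ≤ D) (hY1 : e*s ≤ Y*D) (hY2 : Y*D ≤ e*s + l*(D-s)) :
    ((c:ℝ) + ((s:ℝ)/(D:ℝ)) * ((w:ℝ) - (c:ℝ)), (a:ℝ) + (Y:ℝ)) ∈ P := by
  have hDR : (0:ℝ) < D := by exact_mod_cast hD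
  by_cases hsD' : s = D
  · have hz : e*s = e*D := by rw [hsD']
    have hz2 : l*(D-s) = 0 := by rw [hsD']; ring
    have hYD : Y*D = e*D := by linarith
    have hYe : Y = e := mul_right_cancel₀ (by exact_mod_cast hDR.ne') hYD
    have hsr : (s:ℝ) = (D:ℝ) := by exact_mod_cast hsD'
    have key : ((c:ℝ) + (s:ℝ)/(D:ℝ) * ((w:ℝ) - c), (a:ℝ) + (Y:ℝ)) = ((w:ℝ), (h:ℝ)) := by
      rw [hsr, div_self hDR.ne']
      refine Prod.ext (by simp only; ring) ?_
      simp only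
      rw [he, hYe]; push_cast; ring
    rw [key]; exact hv
  · have hlt : s < D := lt_of_le_of_ne hsD hsD'
    have hds : (0:ℝ) < (D:ℝ) - s := by
      have : (s:ℝ) < D := by exact_mod_cast hlt
      linarith
    set σ : ℝ := (s:ℝ)/(D:ℝ) with hσdef
    set β : ℝ := ((Y:ℝ)*D - (e:ℝ)*s)/((D:ℝ) - s) with hβdef
    have hnum0 : (0:ℝ) ≤ (Y:ℝ)*D - (e:ℝ)*s := by
      have : ((e*s : ℤ) : ℝ) ≤ ((Y*D : ℤ) : ℝ) := by exact_mod_cast hY1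
      push_cast at this; linarith
    have hβ0 : 0 ≤ β := div_nonneg hnum0 hds.le
    have hβl : β ≤ (l:ℝ) := by
      rw [hβdef, div_le_iff₀ hds]
      have : ((Y*D : ℤ) : ℝ) ≤ ((e*s + l*(D-s) : ℤ) : ℝ) := by exact_mod_cast hY2
      push_cast at this; linarith
    have hu : ((c:ℝ), (a:ℝ) + β) ∈ P :=
      hseg (seg_param c a l hl _ (by linarith) (by linarith))
    have hσ0 : 0 ≤ σ := by positivity
    have hσ1 : σ ≤ 1 := by rw [hσdef, div_le_one hDR]; exact_mod_cast hsD
    have hmem := hconv hu hv (by linarith : (0:ℝ) ≤ 1 - σ) hσ0 (by ring)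
    have heq : (1-σ) • ((c:ℝ), (a:ℝ) + β) + σ • ((w:ℝ), (h:ℝ))
        = ((c:ℝ) + σ * ((w:ℝ) - c), (a:ℝ) + (Y:ℝ)) := by
      simp only [Prod.smul_mk, smul_eq_mul, Prod.mk_add_mk]
      refine Prod.ext (by simp only; ring) ?_
      simp only
      have hhe : (h:ℝ) = (a:ℝ) + e := by exact_mod_cast he
      rw [hhe, hβdef, hσdef]
      field_simp
      ring
    rw [heq] at hmem
    exact hmem

-- P ∩ intPts is finite
lemma finP (V : Finset (ℤ×ℤ)) (P : Set (ℝ × ℝ)) (hPV : P = convexHull ℝ (intPt '' ↑V)) :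
    (P ∩ intPts).Finite := by
  have hfin : (intPt '' ↑V).Finite := (V.finite_toSet).image _
  have hcpt : IsCompact P := hPV ▸ hfin.isCompact_convexHull ℝ
  obtain ⟨R, hR⟩ := hcpt.isBounded.subset_closedBall 0
  refine Set.Finite.subset ((Set.finite_Icc ((-⌈R⌉ : ℤ), (-⌈R⌉ : ℤ)) (⌈R⌉, ⌈R⌉)).image intPt) ?_
  rintro z ⟨hzP, p, rfl⟩
  refine ⟨p, ?_, rfl⟩
  have hball := hR hzP
  rw [Metric.mem_closedBall, Prod.dist_eq] at hball
  have h1 : |(p.1:ℝ)| ≤ R := by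
    have : dist (intPt p).1 (0:ℝ×ℝ).1 ≤ R := le_trans (le_max_left _ _) hball
    simpa [intPt, Real.dist_eq] using this
  have h2 : |(p.2:ℝ)| ≤ R := by
    have : dist (intPt p).2 (0:ℝ×ℝ).2 ≤ R := le_trans (le_max_right _ _) hball
    simpa [intPt, Real.dist_eq] using this
  rw [abs_le] at h1 h2
  rw [Set.mem_Icc, Prod.le_def, Prod.le_def]
  have c1 : p.1 ≤ ⌈R⌉ := by exact_mod_cast h1.2.trans (Int.le_ceil R)
  have c2 : p.2 ≤ ⌈R⌉ := by exact_mod_cast h2.2.trans (Int.le_ceil R)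
  have c3 : -⌈R⌉ ≤ p.1 := by
    have : (-(⌈R⌉:ℝ)) ≤ (p.1:ℝ) := le_trans (neg_le_neg (Int.le_ceil R)) h1.1
    exact_mod_cast this
  have c4 : -⌈R⌉ ≤ p.2 := by
    have : (-(⌈R⌉:ℝ)) ≤ (p.2:ℝ) := le_trans (neg_le_neg (Int.le_ceil R)) h2.1
    exact_mod_cast this
  exact ⟨⟨c3, c4⟩, ⟨c1, c2⟩⟩

lemma count_contra (P : Set (ℝ × ℝ)) (ℓ : ℕ) (V : Finset (ℤ×ℤ))
    (hPV : P = convexHull ℝ (intPt '' ↑V)) (hdiam : LatticeDiamIs P ℓ)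
    (z0 d : ℤ × ℤ) (hd : d ≠ 0) (h0 : intPt z0 ∈ P)
    (h1 : intPt (z0.1 + ((ℓ:ℤ)+1)*d.1, z0.2 + ((ℓ:ℤ)+1)*d.2) ∈ P) : False := by
  have hconv : Convex ℝ P := hPV ▸ convex_convexHull ℝ _
  set L : Set (ℝ×ℝ) :=
    {x : ℝ×ℝ | (d.2:ℝ) * x.1 + (-(d.1:ℝ)) * x.2 = (d.2:ℝ)*z0.1 + (-(d.1:ℝ))*z0.2} with hLdef
  have hdd : ¬((d.2:ℝ) = 0 ∧ (-(d.1:ℝ)) = 0) := by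
    rintro ⟨ha, hb⟩
    apply hd
    have e1 : d.1 = 0 := by exact_mod_cast (neg_eq_zero.mp hb)
    have e2 : d.2 = 0 := by exact_mod_cast ha
    exact Prod.ext e1 e2
  have hL : IsLine L := ⟨(d.2:ℝ), (-(d.1:ℝ)), _, hdd, rfl⟩
  have hlp : (0:ℝ) < (ℓ:ℝ) + 1 := by positivity
  have key : ∀ t : ℤ, 0 ≤ t → t ≤ (ℓ:ℤ)+1 →
      intPt (z0.1 + t*d.1, z0.2 + t*d.2) ∈ (P ∩ intPts) ∩ L := by
    intro t ht0 ht1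
    refine ⟨⟨?_, ⟨_, rfl⟩⟩, ?_⟩
    · set τ : ℝ := (t:ℝ)/((ℓ:ℝ)+1) with hτdef
      have hτ0 : 0 ≤ τ := by positivity
      have hτ1 : τ ≤ 1 := by
        rw [hτdef, div_le_one hlp]
        exact_mod_cast (by push_cast; exact_mod_cast ht1 : (t:ℝ) ≤ (ℓ:ℤ)+1)
      have hmem := hconv h0 h1 (by linarith : (0:ℝ) ≤ 1 - τ) hτ0 (by ring)
      have heq : (1-τ) • intPt z0 + τ • intPt (z0.1 + ((ℓ:ℤ)+1)*d.1, z0.2 + ((ℓ:ℤ)+1)*d.2)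
          = intPt (z0.1 + t*d.1, z0.2 + t*d.2) := by
        have hτl : τ * ((ℓ:ℝ)+1) = (t:ℝ) := div_mul_cancel₀ _ hlp.ne'
        simp only [intPt, Prod.smul_mk, smul_eq_mul, Prod.mk_add_mk]
        refine Prod.ext ?_ ?_ <;> simp only <;> push_cast
        · linear_combination (d.1:ℝ) * hτl
        · linear_combination (d.2:ℝ) * hτl
      rw [heq] at hmem
      exact hmem
    · show (d.2:ℝ) * _ + _ * _ = _
      simp only [intPt]
      push_cast
      ring
  set A : Set (ℝ×ℝ) := (fun t : ℤ => intPt (z0.1 + t*d.1, z0.2 + t*d.2)) '' (Set.Icc 0 ((ℓ:ℤ)+1))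
    with hAdef
  have hinj : Set.InjOn (fun t : ℤ => intPt (z0.1 + t*d.1, z0.2 + t*d.2)) (Set.Icc 0 ((ℓ:ℤ)+1)) := by
    intro t _ t' _ hef
    simp only [intPt, Prod.mk.injEq] at hef
    have e1 : t * d.1 = t' * d.1 := by exact_mod_cast (by push_cast at hef ⊢; linarith [hef.1] :
      ((t*d.1 : ℤ):ℝ) = ((t'*d.1 : ℤ):ℝ))
    have e2 : t * d.2 = t' * d.2 := by exact_mod_cast (by push_cast at hef ⊢; linarith [hef.2] :
      ((t*d.2 : ℤ):ℝ) = ((t'*d.2 : ℤ):ℝ))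
    by_cases hd1 : d.1 = 0
    · have hd2 : d.2 ≠ 0 := fun h2 => hd (Prod.ext hd1 h2)
      exact mul_right_cancel₀ hd2 e2
    · exact mul_right_cancel₀ hd1 e1
  have hcardA : A.ncard = ℓ + 2 := by
    rw [hAdef, Set.ncard_image_of_injOn hinj, ← Finset.coe_Icc, Set.ncard_coe_finset,
      Int.card_Icc]
    push_cast
    omega
  have hsub : A ⊆ (P ∩ intPts) ∩ L := by
    rintro _ ⟨t, ht, rfl⟩
    rw [Set.mem_Icc] at ht
    exact key t ht.1 ht.2
  have hfin : ((P ∩ intPts) ∩ L).Finite :=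
    (finP V P hPV).subset (fun z hz => hz.1)
  have hle := Set.ncard_le_ncard hsub hfin
  rw [hcardA] at hle
  have hcontra := hdiam.2 L hL
  rw [Set.inter_assoc] at hle
  rw [Set.inter_assoc] at hcontra
  omega

lemma pt_right (c D s X w : ℤ) (hD : D ≠ 0) (hw : w = c + D) (hX : X = c + s) :
    (c:ℝ) + ((s:ℝ)/((D:ℝ))) * ((w:ℝ) - (c:ℝ)) = (X:ℝ) := by
  have hDR : (D:ℝ) ≠ 0 := Int.cast_ne_zero.mpr hD
  subst hw hX
  push_cast
  field_simp
  ring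

lemma pt_left (c D s X w : ℤ) (hD : D ≠ 0) (hw : w = c - D) (hX : X = c - s) :
    (c:ℝ) + ((s:ℝ)/((D:ℝ))) * ((w:ℝ) - (c:ℝ)) = (X:ℝ) := by
  have hDR : (D:ℝ) ≠ 0 := Int.cast_ne_zero.mpr hD
  subst hw hX
  push_cast
  field_simp
  ring

lemma far_vertex_right (V : Finset (ℤ×ℤ)) (P : Set (ℝ×ℝ))
    (hPV : P = convexHull ℝ (intPt '' ↑V)) (x : ℝ×ℝ) (hx : x ∈ P) (B : ℤ)
    (hB : (B:ℝ) < x.1) : ∃ v ∈ V, B < v.1 := by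
  by_contra hno
  push_neg at hno
  have hsub : P ⊆ {z : ℝ×ℝ | z.1 ≤ (B:ℝ)} := by
    rw [hPV]
    apply convexHull_min
    · rintro _ ⟨p, hp, rfl⟩
      show (intPt p).1 ≤ (B:ℝ)
      simp only [intPt]
      exact_mod_cast hno p hp
    · exact convex_halfSpace_le ⟨fun _ _ => rfl, fun _ _ => rfl⟩ _
  have := hsub hx
  simp only [Set.mem_setOf_eq] at this
  linarith

lemma far_vertex_left (V : Finset (ℤ×ℤ)) (P : Set (ℝ×ℝ))
    (hPV : P = convexHull ℝ (intPt '' ↑V)) (x : ℝ×ℝ) (hx : x ∈ P) (B : ℤ)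
    (hB : x.1 < (B:ℝ)) : ∃ v ∈ V, v.1 < B := by
  by_contra hno
  push_neg at hno
  have hsub : P ⊆ {z : ℝ×ℝ | (B:ℝ) ≤ z.1} := by
    rw [hPV]
    apply convexHull_min
    · rintro _ ⟨p, hp, rfl⟩
      show (B:ℝ) ≤ (intPt p).1
      simp only [intPt]
      exact_mod_cast hno p hp
    · exact convex_halfSpace_ge ⟨fun _ _ => rfl, fun _ _ => rfl⟩ _
  have := hsub hx
  simp only [Set.mem_setOf_eq] at this
  linarith


/-- Lemma: if a convex integer polygon `P` free of points of `nℤ²` contains a segment with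
`ℓ(P) + 1` integer points on a line `x₁ = c` with `0 ≤ c ≤ n`, then `P` lies in the slab
`-n + 1 ≤ x₁ ≤ 2n - 1`. -/
theorem stmt15 (n : ℕ) (hn : 2 ≤ n) (P : Set (ℝ × ℝ)) (hP : IsConvexIntegerPolygon P)
    (hfree : FreeOfLattice n P)
    (ℓ : ℕ) (hdiam : LatticeDiamIs P ℓ)
    (a c : ℤ) (hc0 : 0 ≤ c) (hcn : c ≤ (n : ℤ))
    (hseg : segment ℝ ((c : ℝ), (a : ℝ)) ((c : ℝ), ((a + (ℓ : ℤ) : ℤ) : ℝ)) ⊆ P) :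
    ∀ x ∈ P, (-(n : ℝ) + 1) ≤ x.1 ∧ x.1 ≤ 2 * (n : ℝ) - 1 := by
  obtain ⟨V, hPV, -⟩ := hP
  have hconv : Convex ℝ P := hPV ▸ convex_convexHull ℝ _
  have hl0 : (0:ℤ) ≤ (ℓ:ℤ) := Int.natCast_nonneg ℓ
  have hn' : (2:ℤ) ≤ (n:ℤ) := by exact_mod_cast hn
  have hseg' : segment ℝ ((c:ℝ),(a:ℝ)) ((c:ℝ), (a:ℝ) + (((ℓ:ℤ)):ℝ)) ⊆ P := by
    push_cast
    push_cast at hseg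
    exact hseg
  intro x hx
  constructor
  · -- lower bound
    by_contra hcon
    push_neg at hcon
    obtain ⟨v, hvV, hv1⟩ := far_vertex_left V P hPV x hx (-(n:ℤ)+1) (by push_cast; linarith)
    have hvP : ((v.1:ℝ), (v.2:ℝ)) ∈ P := hPV ▸ subset_convexHull ℝ _ ⟨v, hvV, rfl⟩
    have hw : v.1 ≤ -(n:ℤ) := by omega
    have hD0 : c - v.1 ≠ 0 := by omega
    rcases core (n:ℤ) (ℓ:ℤ) ((n:ℤ) - c) (c - v.1) (v.2 - a) a hn' hl0 (by omega) (by omega)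
        (by omega)
      with ⟨k, j, I1, I2, I3, I4⟩ | ⟨x0, y0, p, q, hp, ⟨J1, J2, J3, J4⟩, ⟨K1, K2, K3, K4⟩⟩
    · have hmem := tri_mem P hconv c a (ℓ:ℤ) (c - v.1) (v.2 - a)
        ((n:ℤ)*k - ((n:ℤ) - c)) ((n:ℤ)*j - a) v.1 v.2 hl0 (by omega) hseg' hvP (by ring)
        (by linarith) (by linarith) I3
        (by have hr : (ℓ:ℤ)*(((n:ℤ)-c)+(c-v.1)-((n:ℤ)*k))
              = (ℓ:ℤ)*((c-v.1) - ((n:ℤ)*k - ((n:ℤ)-c))) := by ring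
            linarith)
      have e1 := pt_left c (c - v.1) ((n:ℤ)*k - ((n:ℤ)-c)) ((n:ℤ)*(1-k)) v.1 hD0
        (by ring) (by ring)
      have e2 : (a:ℝ) + (((n:ℤ)*j - a : ℤ):ℝ) = (((n:ℤ)*j : ℤ):ℝ) := by push_cast; ring
      exact hfree (1-k) j (by rw [show intPt ((n:ℤ)*(1-k), (n:ℤ)*j)
        = ((((n:ℤ)*(1-k):ℤ):ℝ), (((n:ℤ)*j:ℤ):ℝ)) from rfl, ← e1, ← e2]; exact hmem)
    · have hE0 := tri_mem P hconv c a (ℓ:ℤ) (c - v.1) (v.2 - a)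
        (x0 - ((n:ℤ) - c)) (y0 - a) v.1 v.2 hl0 (by omega) hseg' hvP (by ring)
        (by linarith) (by linarith) J3
        (by have hr : (ℓ:ℤ)*(((n:ℤ)-c)+(c-v.1)-x0)
              = (ℓ:ℤ)*((c-v.1) - (x0 - ((n:ℤ)-c))) := by ring
            linarith)
      have hE1 := tri_mem P hconv c a (ℓ:ℤ) (c - v.1) (v.2 - a)
        (x0 + ((ℓ:ℤ)+1)*p - ((n:ℤ) - c)) (y0 + ((ℓ:ℤ)+1)*q - a) v.1 v.2 hl0 (by omega)
        hseg' hvP (by ring) (by linarith) (by linarith) K3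
        (by have hr : (ℓ:ℤ)*(((n:ℤ)-c)+(c-v.1)-(x0 + ((ℓ:ℤ)+1)*p))
              = (ℓ:ℤ)*((c-v.1) - (x0 + ((ℓ:ℤ)+1)*p - ((n:ℤ)-c))) := by ring
            linarith)
      set X0 : ℤ := c - (x0 - ((n:ℤ) - c)) with hX0def
      have e1 := pt_left c (c - v.1) (x0 - ((n:ℤ)-c)) X0 v.1 hD0 (by ring) hX0def
      have e2 : (a:ℝ) + ((y0 - a : ℤ):ℝ) = ((y0 : ℤ):ℝ) := by push_cast; ring
      have e3 := pt_left c (c - v.1) (x0 + ((ℓ:ℤ)+1)*p - ((n:ℤ)-c))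
        (X0 + ((ℓ:ℤ)+1)*(-p)) v.1 hD0 (by ring) (by rw [hX0def]; ring)
      have e4 : (a:ℝ) + ((y0 + ((ℓ:ℤ)+1)*q - a : ℤ):ℝ) = ((y0 + ((ℓ:ℤ)+1)*q : ℤ):ℝ) := by
        push_cast; ring
      have hdne : ((-p, q) : ℤ×ℤ) ≠ 0 := by
        intro hcontr
        rw [Prod.ext_iff] at hcontr
        simp only [Prod.fst_zero, Prod.snd_zero] at hcontr
        omega
      exact count_contra P ℓ V hPV hdiam (X0, y0) (-p, q) hdne
        (by rw [show intPt (X0, y0) = (((X0:ℤ):ℝ), ((y0:ℤ):ℝ)) from rfl, ← e1, ← e2]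
            exact hE0)
        (by rw [show intPt ((X0, y0).1 + ((ℓ:ℤ)+1)*((-p, q):ℤ×ℤ).1,
              (X0, y0).2 + ((ℓ:ℤ)+1)*((-p, q):ℤ×ℤ).2)
              = (((X0 + ((ℓ:ℤ)+1)*(-p) : ℤ):ℝ), ((y0 + ((ℓ:ℤ)+1)*q : ℤ):ℝ)) from rfl,
              ← e3, ← e4]
            exact hE1)
  · -- upper bound
    by_contra hcon
    push_neg at hcon
    obtain ⟨v, hvV, hv1⟩ := far_vertex_right V P hPV x hx (2*(n:ℤ)-1) (by push_cast; linarith)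
    have hvP : ((v.1:ℝ), (v.2:ℝ)) ∈ P := hPV ▸ subset_convexHull ℝ _ ⟨v, hvV, rfl⟩
    have hw : 2*(n:ℤ) ≤ v.1 := by omega
    have hD0 : v.1 - c ≠ 0 := by omega
    rcases core (n:ℤ) (ℓ:ℤ) c (v.1 - c) (v.2 - a) a hn' hl0 hc0 hcn (by omega)
      with ⟨k, j, I1, I2, I3, I4⟩ | ⟨x0, y0, p, q, hp, ⟨J1, J2, J3, J4⟩, ⟨K1, K2, K3, K4⟩⟩
    · have hmem := tri_mem P hconv c a (ℓ:ℤ) (v.1 - c) (v.2 - a)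
        ((n:ℤ)*k - c) ((n:ℤ)*j - a) v.1 v.2 hl0 (by omega) hseg' hvP (by ring)
        (by linarith) (by linarith) I3
        (by have hr : (ℓ:ℤ)*(c+(v.1-c)-((n:ℤ)*k))
              = (ℓ:ℤ)*((v.1-c) - ((n:ℤ)*k - c)) := by ring
            linarith)
      have e1 := pt_right c (v.1 - c) ((n:ℤ)*k - c) ((n:ℤ)*k) v.1 hD0 (by ring) (by ring)
      have e2 : (a:ℝ) + (((n:ℤ)*j - a : ℤ):ℝ) = (((n:ℤ)*j : ℤ):ℝ) := by push_cast; ring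
      exact hfree k j (by rw [show intPt ((n:ℤ)*k, (n:ℤ)*j)
        = ((((n:ℤ)*k:ℤ):ℝ), (((n:ℤ)*j:ℤ):ℝ)) from rfl, ← e1, ← e2]; exact hmem)
    · have hE0 := tri_mem P hconv c a (ℓ:ℤ) (v.1 - c) (v.2 - a)
        (x0 - c) (y0 - a) v.1 v.2 hl0 (by omega) hseg' hvP (by ring)
        (by linarith) (by linarith) J3
        (by have hr : (ℓ:ℤ)*(c+(v.1-c)-x0) = (ℓ:ℤ)*((v.1-c) - (x0 - c)) := by ring
            linarith)
      have hE1 := tri_mem P hconv c a (ℓ:ℤ) (v.1 - c) (v.2 - a)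
        (x0 + ((ℓ:ℤ)+1)*p - c) (y0 + ((ℓ:ℤ)+1)*q - a) v.1 v.2 hl0 (by omega)
        hseg' hvP (by ring) (by linarith) (by linarith) K3
        (by have hr : (ℓ:ℤ)*(c+(v.1-c)-(x0 + ((ℓ:ℤ)+1)*p))
              = (ℓ:ℤ)*((v.1-c) - (x0 + ((ℓ:ℤ)+1)*p - c)) := by ring
            linarith)
      have e1 := pt_right c (v.1 - c) (x0 - c) x0 v.1 hD0 (by ring) (by ring)
      have e2 : (a:ℝ) + ((y0 - a : ℤ):ℝ) = ((y0 : ℤ):ℝ) := by push_cast; ring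
      have e3 := pt_right c (v.1 - c) (x0 + ((ℓ:ℤ)+1)*p - c)
        (x0 + ((ℓ:ℤ)+1)*p) v.1 hD0 (by ring) (by ring)
      have e4 : (a:ℝ) + ((y0 + ((ℓ:ℤ)+1)*q - a : ℤ):ℝ) = ((y0 + ((ℓ:ℤ)+1)*q : ℤ):ℝ) := by
        push_cast; ring
      have hdne : ((p, q) : ℤ×ℤ) ≠ 0 := by
        intro hcontr
        rw [Prod.ext_iff] at hcontr
        simp only [Prod.fst_zero, Prod.snd_zero] at hcontr
        omega
      exact count_contra P ℓ V hPV hdiam (x0, y0) (p, q) hdne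
        (by rw [show intPt (x0, y0) = (((x0:ℤ):ℝ), ((y0:ℤ):ℝ)) from rfl, ← e1, ← e2]
            exact hE0)
        (by rw [show intPt ((x0, y0).1 + ((ℓ:ℤ)+1)*((p, q):ℤ×ℤ).1,
              (x0, y0).2 + ((ℓ:ℤ)+1)*((p, q):ℤ×ℤ).2)
              = (((x0 + ((ℓ:ℤ)+1)*p : ℤ):ℝ), ((y0 + ((ℓ:ℤ)+1)*q : ℤ):ℝ)) from rfl,
              ← e3, ← e4]
            exact hE1)
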